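/- The bilateral backward shift B on c_∞(ℤ) (the Banach space of two-sided complex sequences convergent as |n| → ∞, with the sup norm), defined by (Bf)ₙ = f_{n+1}, is not weakly supercyclic. -/

import Mathlib

open Filter Topology

noncomputable def cInfZ : Submodule ℂ (BoundedContinuousFunction ℤ ℂ) where
  carrier := {f | ∃ L : ℂ, Tendsto (fun n : ℤ => f n) cofinite (nhds L)}
  zero_mem' := ⟨0, by simp⟩
  add_mem' := by
    rintro f g ⟨L, hL⟩ ⟨M, hM⟩
    exact ⟨L + M, by simpa using hL.add hM⟩
  smul_mem' := by
    rintro c f ⟨L, hL⟩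
    exact ⟨c • L, by simpa [smul_eq_mul] using hL.const_mul c⟩

namespace CInfZAux

/-- The limit at infinity of an element of `cInfZ`. -/
noncomputable def limF (g : ↥cInfZ) : ℂ :=
  limUnder cofinite (fun n : ℤ => (g : BoundedContinuousFunction ℤ ℂ) n)

lemma tendsto_limF (g : ↥cInfZ) :
    Tendsto (fun n : ℤ => (g : BoundedContinuousFunction ℤ ℂ) n) cofinite (nhds (limF g)) := by
  obtain ⟨L, hL⟩ := g.2
  have : limF g = L := hL.limUnder_eq
  rw [this]; exact hL

lemma limF_eq {g : ↥cInfZ} {L : ℂ}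
    (h : Tendsto (fun n : ℤ => (g : BoundedContinuousFunction ℤ ℂ) n) cofinite (nhds L)) :
    limF g = L := h.limUnder_eq

/-- The limit functional as a continuous linear map. -/
noncomputable def phi : ↥cInfZ →L[ℂ] ℂ :=
  LinearMap.mkContinuous
    { toFun := limF
      map_add' := fun g h => limF_eq (by simpa using (tendsto_limF g).add (tendsto_limF h))
      map_smul' := fun c g => limF_eq (by
        simpa [smul_eq_mul] using (tendsto_limF g).const_mul c) }
    1
    (by
      intro g
      simp only [LinearMap.coe_mk, AddHom.coe_mk, one_mul]
      refine le_of_tendsto (tendsto_limF g).norm ?_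
      exact Eventually.of_forall fun n =>
        (g : BoundedContinuousFunction ℤ ℂ).norm_coe_le_norm n)

/-- Evaluation at 0 as a continuous linear map. -/
noncomputable def ev0 : ↥cInfZ →L[ℂ] ℂ :=
  LinearMap.mkContinuous
    { toFun := fun g => (g : BoundedContinuousFunction ℤ ℂ) 0
      map_add' := fun g h => rfl
      map_smul' := fun c g => rfl }
    1
    (by
      intro g
      simp only [LinearMap.coe_mk, AddHom.coe_mk, one_mul]
      exact (g : BoundedContinuousFunction ℤ ℂ).norm_coe_le_norm 0)

lemma phi_apply (g : ↥cInfZ) : phi g = limF g := rfl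
lemma ev0_apply (g : ↥cInfZ) : ev0 g = (g : BoundedContinuousFunction ℤ ℂ) 0 := rfl

lemma continuous_weak (ψ : ↥cInfZ →L[ℂ] ℂ) :
    Continuous fun x : WeakSpace ℂ ↥cInfZ => ψ (x : ↥cInfZ) :=
  WeakBilin.eval_continuous ((topDualPairing ℂ ↥cInfZ).flip) ψ

end CInfZAux

open CInfZAux

/-- the bilateral backward shift `(Bf)ₙ = f_{n+1}` on `c_∞(ℤ)` is not
weakly supercyclic. -/
theorem bilateral_shift_on_cInfZ_not_weakly_supercyclic
    (B : ↥cInfZ →L[ℂ] ↥cInfZ)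
    (hB : ∀ (f : ↥cInfZ) (n : ℤ), ((B f : BoundedContinuousFunction ℤ ℂ)) n
          = (f : BoundedContinuousFunction ℤ ℂ) (n + 1)) :
    ¬ ∃ f : ↥cInfZ, Dense {g : WeakSpace ℂ ↥cInfZ | ∃ (c : ℂ) (n : ℕ), g = c • (B ^ n) f} := by
  rintro ⟨f, hf⟩
  -- action of powers of B
  have hBpow : ∀ (n : ℕ) (g : ↥cInfZ) (k : ℤ),
      (((B ^ n) g : BoundedContinuousFunction ℤ ℂ)) k
        = (g : BoundedContinuousFunction ℤ ℂ) (k + n) := by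
    intro n
    induction n with
    | zero => intro g k; simp
    | succ n ih =>
      intro g k
      have h1 : B ^ (n + 1) = (B ^ n) * B := by rw [pow_succ]
      rw [h1]
      show (((B ^ n) (B g) : BoundedContinuousFunction ℤ ℂ)) k = _
      rw [ih (B g) k, hB g]
      congr 1
      push_cast
      ring
  -- the limit of B^n g equals the limit of g
  have hphiB : ∀ (n : ℕ) (g : ↥cInfZ), phi ((B ^ n) g) = phi g := by
    intro n g
    have hinj : Function.Injective (fun k : ℤ => k + (n : ℤ)) := fun a b h => by
      simpa using h
    have ht : Tendsto (fun k : ℤ => (g : BoundedContinuousFunction ℤ ℂ) (k + n)) cofinite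
        (nhds (limF g)) :=
      (tendsto_limF g).comp (Function.Injective.tendsto_cofinite hinj)
    have ht2 : Tendsto (fun k : ℤ => (((B ^ n) g : BoundedContinuousFunction ℤ ℂ)) k) cofinite
        (nhds (limF g)) := by
      simpa only [hBpow n g] using ht
    rw [phi_apply, limF_eq ht2, phi_apply]
  set L : ℂ := phi f with hLdef
  -- values of phi and ev0 on the orbit
  have horb : ∀ g : WeakSpace ℂ ↥cInfZ, (∃ (c : ℂ) (n : ℕ), g = c • (B ^ n) f) →
      ∃ (c : ℂ) (n : ℕ),
      phi (g : ↥cInfZ) = c * L ∧ ev0 (g : ↥cInfZ) = c * (f : BoundedContinuousFunction ℤ ℂ) n := by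
    rintro g ⟨c, n, rfl⟩
    refine ⟨c, n, ?_, ?_⟩
    · show phi (c • (B ^ n) f) = c * L
      rw [map_smul, hphiB n f]; rfl
    · show ev0 (c • (B ^ n) f) = _
      rw [map_smul, smul_eq_mul, ev0_apply, hBpow n f 0]
      norm_num
  by_cases hL0 : L = 0
  · -- Case L = 0: the orbit lies in ker phi; the constant 1 has phi = 1.
    have hone : (1 : BoundedContinuousFunction ℤ ℂ) ∈ cInfZ :=
      ⟨1, by simpa using (tendsto_const_nhds : Tendsto (fun _ : ℤ => (1:ℂ)) cofinite _)⟩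
    set t : ↥cInfZ := ⟨1, hone⟩ with ht
    have hphit : phi t = 1 := by
      rw [phi_apply]
      exact limF_eq (tendsto_const_nhds.congr (fun n => by simp [ht]))
    have hUopen : IsOpen {g : WeakSpace ℂ ↥cInfZ | ‖phi (g : ↥cInfZ) - 1‖ < 1/2} :=
      isOpen_lt (((continuous_weak phi).sub continuous_const).norm) continuous_const
    obtain ⟨g, hgS, hgU⟩ := hf.exists_mem_open hUopen ⟨t, by show ‖phi t - 1‖ < 1/2; rw [hphit]; norm_num⟩
    obtain ⟨c, n, hφ, -⟩ := horb g hgS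
    simp only [Set.mem_setOf_eq, hφ, hL0, mul_zero] at hgU
    norm_num at hgU
  · -- Case L ≠ 0.
    have hLpos : 0 < ‖L‖ := norm_pos_iff.mpr hL0
    obtain ⟨Mr, hMr⟩ : ∃ M : ℝ, M = 3 * ‖f‖ / (2 * ‖L‖) + 1 := ⟨_, rfl⟩
    have hdiv : 0 ≤ 3 * ‖f‖ / (2 * ‖L‖) := div_nonneg (by positivity) (by positivity)
    have hMr1 : (1 : ℝ) ≤ Mr := by rw [hMr]; linarith
    -- the target function: Mr at 0, 1 elsewhere
    set F : ℤ → ℂ := fun n => if n = 0 then (Mr : ℂ) else 1 with hF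
    have hFnorm : ∀ n : ℤ, ‖F n‖ ≤ Mr := by
      intro n
      by_cases h : n = 0
      · simp only [hF, if_pos h]
        rw [Complex.norm_real]
        rw [Real.norm_of_nonneg (by linarith)]
      · simp only [hF, if_neg h, norm_one]
        linarith
    set tf : BoundedContinuousFunction ℤ ℂ :=
      BoundedContinuousFunction.ofNormedAddCommGroup F
        continuous_of_discreteTopology Mr hFnorm with htf
    have tfap : ∀ n : ℤ, tf n = F n := fun n => rfl
    have hev : (fun n : ℤ => tf n) =ᶠ[cofinite] (fun _ : ℤ => (1 : ℂ)) := by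
      refine (Set.Finite.eventually_cofinite_notMem (Set.finite_singleton (0:ℤ))).mono ?_
      intro n hn
      simp only [Set.mem_singleton_iff] at hn
      show tf n = 1
      rw [tfap, hF]
      simp [hn]
    have htf_mem : tf ∈ cInfZ := ⟨1, Tendsto.congr' hev.symm tendsto_const_nhds⟩
    set t : ↥cInfZ := ⟨tf, htf_mem⟩ with ht
    have hphit : phi t = 1 := by
      rw [phi_apply]
      exact limF_eq (Tendsto.congr' hev.symm tendsto_const_nhds)
    have hev0t : ev0 t = (Mr : ℂ) := by
      rw [ev0_apply]
      show tf 0 = _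
      rw [tfap, hF]
      simp
    -- the open set
    have hUopen : IsOpen {g : WeakSpace ℂ ↥cInfZ |
        ‖phi (g : ↥cInfZ) - 1‖ < 1/2 ∧ ‖ev0 (g : ↥cInfZ) - (Mr : ℂ)‖ < 1/2} :=
      (isOpen_lt (((continuous_weak phi).sub continuous_const).norm) continuous_const).inter
        (isOpen_lt (((continuous_weak ev0).sub continuous_const).norm) continuous_const)
    obtain ⟨g, hgS, hgU1, hgU2⟩ := hf.exists_mem_open hUopen ⟨t, by
      constructor
      · show ‖phi t - 1‖ < 1/2
        rw [hphit]; norm_num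
      · show ‖ev0 t - (Mr : ℂ)‖ < 1/2
        rw [hev0t]; norm_num⟩
    obtain ⟨c, n, hφ, he⟩ := horb g hgS
    rw [hφ] at hgU1
    rw [he] at hgU2
    -- bound on c
    have hc32 : ‖c‖ * ‖L‖ < 3/2 := by
      have := norm_sub_norm_le (c * L) 1
      rw [norm_mul] at this
      simp only [norm_one] at this
      linarith
    have hcb : ‖c‖ ≤ 3 / (2 * ‖L‖) := by
      rw [le_div_iff₀ (by positivity)]
      linarith [hc32]
    -- bound on c * f n
    have hfn : ‖(f : BoundedContinuousFunction ℤ ℂ) (n : ℤ)‖ ≤ ‖f‖ :=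
      (f : BoundedContinuousFunction ℤ ℂ).norm_coe_le_norm _
    have hcfn : ‖c * (f : BoundedContinuousFunction ℤ ℂ) (n : ℤ)‖ ≤ Mr - 1 := by
      rw [norm_mul]
      calc ‖c‖ * ‖(f : BoundedContinuousFunction ℤ ℂ) (n : ℤ)‖
          ≤ (3 / (2 * ‖L‖)) * ‖f‖ :=
            mul_le_mul hcb hfn (norm_nonneg _) (by positivity)
        _ = Mr - 1 := by rw [hMr]; field_simp; ring
    have hMnorm : ‖(Mr : ℂ)‖ = Mr := by
      rw [Complex.norm_real]
      exact Real.norm_of_nonneg (by linarith)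
    have hkey : (1 : ℝ) ≤ ‖c * (f : BoundedContinuousFunction ℤ ℂ) (n : ℤ) - (Mr : ℂ)‖ := by
      have := norm_sub_norm_le ((Mr : ℂ)) (c * (f : BoundedContinuousFunction ℤ ℂ) (n : ℤ))
      rw [hMnorm, norm_sub_rev] at this
      linarith
    linarith
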